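/- Let (Γ,μ) be a weighted graph satisfying (p₀) and the skewed parabolic mean value inequality (sPMV). Then (VC), (TC) and the mean value inequality (MV) hold. -/

import Mathlib

open scoped BigOperators Classical

/-- A weighted graph: symmetric nonnegative edge weights on a (countably infinite,
connected) vertex set; `x ∼ y` iff `0 < w x y`. -/
structure WeightedGraph (V : Type*) where
  w : V → V → ℝ
  symm : ∀ x y, w x y = w y x
  nonneg : ∀ x y, 0 ≤ w x y
  summable' : ∀ x, Summable (w x)
  mu_pos : ∀ x, 0 < ∑' y, w x y
  connected : ∀ x y : V, Relation.ReflTransGen (fun a b => 0 < w a b) x y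

namespace WeightedGraph

variable {V : Type*}

/-- The vertex measure `μ(x) = Σ_{y∼x} μ_{xy}`. -/
noncomputable def mu (G : WeightedGraph V) (x : V) : ℝ := ∑' y, G.w x y

/-- Measure of a set of vertices. -/
noncomputable def muSet (G : WeightedGraph V) (A : Set V) : ℝ := ∑' y : A, G.mu y

/-- One-step transition probability `P(x,y) = μ_{xy}/μ(x)`. -/
noncomputable def P (G : WeightedGraph V) (x y : V) : ℝ := G.w x y / G.mu x

/-- `n`-step transition probabilities. -/
noncomputable def Pn (G : WeightedGraph V) : ℕ → V → V → ℝ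
  | 0, x, y => if x = y then 1 else 0
  | n + 1, x, y => ∑' z, G.P x z * G.Pn n z y

/-- The heat kernel `p_n(x,y) = P_n(x,y)/μ(y)`. -/
noncomputable def hk (G : WeightedGraph V) (n : ℕ) (x y : V) : ℝ := G.Pn n x y / G.mu y

/-- There is a walk of length `n` from `x` to `y`. -/
def walkLen (G : WeightedGraph V) : ℕ → V → V → Prop
  | 0, x, y => x = y
  | n + 1, x, y => ∃ z, 0 < G.w x z ∧ G.walkLen n z y

/-- The (shortest path) graph distance. -/
noncomputable def dist (G : WeightedGraph V) (x y : V) : ℕ := sInf {n | G.walkLen n x y}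

/-- Open ball `B(x,R)`. -/
def ball (G : WeightedGraph V) (x : V) (R : ℕ) : Set V := {y | G.dist x y < R}

/-- Closed ball `B̄(x,R)`. -/
def cball (G : WeightedGraph V) (x : V) (R : ℕ) : Set V := {y | G.dist x y ≤ R}

/-- Volume of a ball: `V(x,R) = μ(B(x,R))`. -/
noncomputable def vol (G : WeightedGraph V) (x : V) (R : ℕ) : ℝ := G.muSet (G.ball x R)

/-- `survive B n x` is the probability that the walk started at `x` stays inside `B`
during its first `n` steps, i.e. `P(T_B > n | X_0 = x)`. -/
noncomputable def survive (G : WeightedGraph V) (B : Set V) : ℕ → V → ℝ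
  | 0, x => if x ∈ B then 1 else 0
  | n + 1, x => if x ∈ B then ∑' y, G.P x y * G.survive B n y else 0

/-- Mean exit time `E(x,R) = E(T_{B(x,R)} | X_0 = x) = Σ_{n≥0} P(T > n)`. -/
noncomputable def meanExit (G : WeightedGraph V) (x : V) (R : ℕ) : ℝ :=
  ∑' n, G.survive (G.ball x R) n x

/-- Generalized inverse `e(x,n) = min {R ∈ ℕ : E(x,R) ≥ n}` of the mean exit time. -/
noncomputable def einv (G : WeightedGraph V) (x : V) (n : ℕ) : ℕ :=
  sInf {R : ℕ | (n : ℝ) ≤ G.meanExit x R}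

/-- Condition `(p₀)`. -/
def condP0 (G : WeightedGraph V) : Prop :=
  ∃ p₀ > (0 : ℝ), ∀ x y : V, 0 < G.w x y → p₀ ≤ G.w x y / G.mu x

/-- Volume comparison principle `(VC)`. -/
def condVC (G : WeightedGraph V) : Prop :=
  ∃ C > (1 : ℝ), ∀ (x : V) (R : ℕ), 0 < R → ∀ y ∈ G.ball x R,
    G.vol x (2 * R) ≤ C * G.vol y R

/-- Volume doubling `(VD)`. -/
def condVD (G : WeightedGraph V) : Prop :=
  ∃ D > (0 : ℝ), ∀ (x : V) (R : ℕ), 0 < R → G.vol x (2 * R) ≤ D * G.vol x R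

/-- Time comparison principle `(TC)`. -/
def condTC (G : WeightedGraph V) : Prop :=
  ∃ C > (1 : ℝ), ∀ (x : V) (R : ℕ), 0 < R → ∀ y ∈ G.ball x R,
    G.meanExit x (2 * R) ≤ C * G.meanExit y R

/-- Time doubling `(TD)`. -/
def condTD (G : WeightedGraph V) : Prop :=
  ∃ D > (0 : ℝ), ∀ (x : V) (R : ℕ), 0 < R → G.meanExit x (2 * R) ≤ D * G.meanExit x R

/-- Uniformity of the mean exit time `(E)`. -/
def condE (G : WeightedGraph V) : Prop :=
  ∃ C > (1 : ℝ), ∀ (x y : V) (R : ℕ), 0 < R → G.meanExit x R ≤ C * G.meanExit y R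

/-- `u` is harmonic on `B`: `Pu = u` on `B`. -/
def IsHarmonicOn (G : WeightedGraph V) (u : V → ℝ) (B : Set V) : Prop :=
  ∀ z ∈ B, (∑' y, G.P z y * u y) = u z

/-- Mean value inequality `(MV)`. -/
def condMV (G : WeightedGraph V) : Prop :=
  ∃ C > (0 : ℝ), ∀ (x : V) (R : ℕ), 0 < R → ∀ u : V → ℝ,
    (∀ y ∈ G.cball x R, 0 ≤ u y) → G.IsHarmonicOn u (G.ball x R) →
    u x ≤ C / G.vol x R * ∑' y : G.ball x R, u y * G.mu y

/-- Elliptic Harnack inequality `(H)`. -/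
def condH (G : WeightedGraph V) : Prop :=
  ∃ C > (0 : ℝ), ∀ (x : V) (R : ℕ), 0 < R → ∀ u : V → ℝ,
    (∀ y ∈ G.cball x (2 * R), 0 ≤ u y) → G.IsHarmonicOn u (G.ball x (2 * R)) →
    ∀ z ∈ G.ball x R, ∀ v ∈ G.ball x R, u z ≤ C * u v

/-- Skewed parabolic mean value inequality `(sPMV)`. -/
def condSPMV (G : WeightedGraph V) : Prop :=
  ∃ c₁ c₂ C : ℝ, 0 < c₁ ∧ c₁ < c₂ ∧ c₂ ≤ 1 ∧ 1 ≤ C ∧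
    ∀ (x : V) (R : ℕ), 0 < R → ∀ y ∈ G.ball x R, ∀ u : ℕ → V → ℝ,
      (∀ i ≤ ⌊c₂ * G.meanExit x R⌋₊, ∀ z ∈ G.ball x R, 0 ≤ u i z) →
      (∀ i : ℕ, i + 1 ≤ ⌊c₂ * G.meanExit x R⌋₊ → ∀ z ∈ G.ball x R,
        u (i + 1) z = ∑' v, G.P z v * u i v) →
      u ⌊c₂ * G.meanExit x R⌋₊ x ≤
        C / (G.vol y (2 * R) * G.meanExit y (2 * R)) *
          ∑ i ∈ Finset.Icc ⌈c₁ * G.meanExit x R⌉₊ ⌊c₂ * G.meanExit x R⌋₊,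
            ∑' z : G.ball x R, u i z * G.mu z

/-- The local diagonal upper estimate `P_n(x,x) ≤ C μ(x) / V(x,e(x,n))`. -/
def condLDUE (G : WeightedGraph V) : Prop :=
  ∃ C > (0 : ℝ), ∀ (x : V) (n : ℕ), 1 ≤ n →
    G.Pn n x x ≤ C * G.mu x / G.vol x (G.einv x n)

/-- The local kernel function `k_y(n,R)`: the maximal integer `1 ≤ k ≤ n` with
`n/k ≤ q E(y, ⌊R/k⌋)`, and `0` if there is no such `k`. -/
noncomputable def kker (G : WeightedGraph V) (q : ℝ) (y : V) (n R : ℕ) : ℕ :=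
  sSup {k : ℕ | 1 ≤ k ∧ k ≤ n ∧ (n : ℝ) / k ≤ q * G.meanExit y (R / k)}

/-- `k_C(x,n,R) = min_{z ∈ B(x,e(x,n))} k_z(Cn, R/C)`. -/
noncomputable def kC (G : WeightedGraph V) (q : ℝ) (Cc : ℕ) (x : V) (n R : ℕ) : ℕ :=
  sInf {m : ℕ | ∃ z ∈ G.ball x (G.einv x n), m = G.kker q z (Cc * n) (R / Cc)}

/-- `κ_C(n,x,y)`. -/
noncomputable def kappaC (G : WeightedGraph V) (q : ℝ) (Cc : ℕ) (n : ℕ) (x y : V) : ℕ :=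
  if 3 * (G.einv x n + G.einv y n) < G.dist x y then
    max (G.kC q Cc x n (G.dist x y)) (G.kC q Cc y n (G.dist x y))
  else 0

/-- The local upper estimate (LUE). -/
def condLUE (G : WeightedGraph V) : Prop :=
  ∃ q > (0 : ℝ), ∃ C > (0 : ℝ), ∃ c > (0 : ℝ), ∀ (x y : V) (n : ℕ), 1 ≤ n →
    G.hk n x y ≤
      C / Real.sqrt (G.vol x (G.einv x n) * G.vol y (G.einv y n)) *
        Real.exp (-c * (G.kappaC q 3 n x y : ℝ))

/-- `A_{x,y} = B(x,d(x,y)) ∪ B(y,d(x,y))`. -/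
def Axy (G : WeightedGraph V) (x y : V) : Set V :=
  G.ball x (G.dist x y) ∪ G.ball y (G.dist x y)

/-- `κ(n,x,y) = min_{z ∈ A_{x,y}} k_z(3n, d(x,y)/3)` if `d(x,y) > 3[e(x,n)+e(y,n)]`,
and `0` otherwise. -/
noncomputable def kappa (G : WeightedGraph V) (q : ℝ) (n : ℕ) (x y : V) : ℕ :=
  if 3 * (G.einv x n + G.einv y n) < G.dist x y then
    sInf {m : ℕ | ∃ z ∈ G.Axy x y, m = G.kker q z (3 * n) (G.dist x y / 3)}
  else 0

/-- `l(n,x,y) = max_{z ∈ A_{x,y}} k_z(n, d(x,y))`. -/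
noncomputable def lfun (G : WeightedGraph V) (q : ℝ) (n : ℕ) (x y : V) : ℕ :=
  sSup {m : ℕ | ∃ z ∈ G.Axy x y, m = G.kker q z n (G.dist x y)}

/-- Inhomogeneity of the mean exit time: `δ(n,A) = log max_{z,v∈A} e(z,n)/e(v,n)`. -/
noncomputable def deltaIn (G : WeightedGraph V) (n : ℕ) (A : Set V) : ℝ :=
  Real.log (sSup {r : ℝ | ∃ z ∈ A, ∃ v ∈ A, r = (G.einv z n : ℝ) / (G.einv v n)})

/-- The lower sub-Gaussian kernel `ν(n,x,y) = l(n,x,y)[1 + δ(n,A_{x,y})]`. -/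
noncomputable def nu (G : WeightedGraph V) (q : ℝ) (n : ℕ) (x y : V) : ℝ :=
  (G.lfun q n x y : ℝ) * (1 + G.deltaIn n (G.Axy x y))

/-- `F` is a space-time scale function satisfying `(ED_F)`. -/
def EDF (F : ℕ → ℝ) : Prop :=
  StrictMono F ∧ (∀ R, 0 < F R) ∧
    ∃ D > (0 : ℝ), ∃ β > (1 : ℝ), ∃ c > (0 : ℝ),
      (∀ R, F (2 * R) ≤ D * F R) ∧
      ∀ r R : ℕ, 1 ≤ r → r ≤ R → c * ((R : ℝ) / r) ^ β ≤ F R / F r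

/-- Generalized inverse `f = F⁻¹`. -/
noncomputable def finv (F : ℕ → ℝ) (n : ℕ) : ℕ := sInf {R : ℕ | (n : ℝ) ≤ F R}

/-- The kernel `k(n,R)` built from `F`: the maximal integer `1 ≤ k ≤ n` with
`n/k ≤ q F(⌊R/k⌋)`, and `0` if there is no such `k`. -/
noncomputable def kF (q : ℝ) (F : ℕ → ℝ) (n R : ℕ) : ℕ :=
  sSup {k : ℕ | 1 ≤ k ∧ k ≤ n ∧ (n : ℝ) / k ≤ q * F (R / k)}

/-- Sub-Gaussian upper estimate `(UE_F)`. -/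
def condUEF (G : WeightedGraph V) (F : ℕ → ℝ) : Prop :=
  ∃ q > (0 : ℝ), ∃ C > (0 : ℝ), ∃ c > (0 : ℝ), ∀ (x y : V) (n : ℕ), 1 ≤ n →
    G.Pn n x y ≤
      C * G.mu y / G.vol x (finv F n) * Real.exp (-c * (kF q F n (G.dist x y) : ℝ))

/-- Sub-Gaussian lower estimate `(LE_F)`. -/
def condLEF (G : WeightedGraph V) (F : ℕ → ℝ) : Prop :=
  ∃ q > (0 : ℝ), ∃ c > (0 : ℝ), ∃ C > (0 : ℝ), ∀ (x y : V) (n : ℕ), 1 ≤ n →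
    c * G.mu y / G.vol x (finv F n) * Real.exp (-C * (kF q F n (G.dist x y) : ℝ)) ≤
      G.Pn n x y + G.Pn (n + 1) x y

/-- `F`-parabolic Harnack inequality `(PH_F)`. -/
def condPHF (G : WeightedGraph V) (F : ℕ → ℝ) : Prop :=
  ∃ CH > (0 : ℝ), ∀ (x : V) (R k : ℕ), 0 < R → ∀ u : ℕ → V → ℝ,
    (∀ i : ℕ, k ≤ i → (i : ℝ) ≤ k + F (4 * R) → ∀ z ∈ G.ball x (2 * R), 0 ≤ u i z) →
    (∀ i : ℕ, k ≤ i → ((i : ℝ) + 1) ≤ k + F (4 * R) → ∀ z ∈ G.ball x (2 * R),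
      u (i + 1) z = ∑' v, G.P z v * u i v) →
    ∀ nm np : ℕ, ∀ xm ∈ G.ball x R, ∀ xp ∈ G.ball x R,
      (k : ℝ) + F R ≤ nm → (nm : ℝ) ≤ k + F (2 * R) →
      (k : ℝ) + F (3 * R) ≤ np → (np : ℝ) ≤ k + F (4 * R) →
      (G.dist xm xp : ℝ) ≤ (np : ℝ) - nm →
      u nm xm ≤ CH * (u np xp + u (np + 1) xp)

end WeightedGraph

section Aux
open WeightedGraph
variable {V : Type*} (G : WeightedGraph V)

namespace WeightedGraph

lemma mu_nonneg (x : V) : 0 ≤ G.mu x := tsum_nonneg (G.nonneg x)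

lemma mu_pos' (x : V) : 0 < G.mu x := G.mu_pos x

lemma P_nonneg (x y : V) : 0 ≤ G.P x y := div_nonneg (G.nonneg x y) (G.mu_nonneg x)

lemma P_summable (x : V) : Summable (G.P x) := (G.summable' x).div_const _

lemma tsum_P (x : V) : ∑' y, G.P x y = 1 := by
  unfold P
  rw [tsum_div_const, mu]
  exact div_self (G.mu_pos x).ne'

lemma w_le_mu (x y : V) : G.w x y ≤ G.mu x :=
  Summable.le_tsum (G.summable' x) y (fun _ _ => G.nonneg x _)

lemma P_le_one (x y : V) : G.P x y ≤ 1 := by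
  unfold P
  rw [div_le_one (G.mu_pos' x)]
  exact G.w_le_mu x y

lemma summable_P_mul {x : V} {f : V → ℝ} (h0 : ∀ y, 0 ≤ f y) (h1 : ∀ y, f y ≤ 1) :
    Summable (fun y => G.P x y * f y) :=
  Summable.of_nonneg_of_le (fun y => mul_nonneg (G.P_nonneg x y) (h0 y))
    (fun y => mul_le_of_le_one_right (G.P_nonneg x y) (h1 y)) (G.P_summable x)

/- walk lemmas -/

lemma walkLen_append_edge : ∀ n (a b c : V), G.walkLen n a b → 0 < G.w b c →
    G.walkLen (n + 1) a c := by
  intro n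
  induction n with
  | zero => intro a b c h hw; cases h; exact ⟨c, hw, rfl⟩
  | succ n ih =>
    intro a b c h hw
    obtain ⟨z, hz, hzb⟩ := h
    exact ⟨z, hz, ih z b c hzb hw⟩

lemma walkLen_symm : ∀ n (a b : V), G.walkLen n a b → G.walkLen n b a := by
  intro n
  induction n with
  | zero => intro a b h; exact h.symm
  | succ n ih =>
    intro a b h
    obtain ⟨z, hz, hzb⟩ := h
    have := ih z b hzb
    exact G.walkLen_append_edge n b z a this (by rwa [G.symm a z] at hz)

lemma walkLen_last {n : ℕ} {x y : V} (h : G.walkLen (n + 1) x y) :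
    ∃ z, G.walkLen n x z ∧ 0 < G.w z y := by
  obtain ⟨z, hz, hzx⟩ := G.walkLen_symm (n+1) x y h
  exact ⟨z, G.walkLen_symm n z x hzx, by rwa [G.symm z y]⟩

lemma walkLen_trans : ∀ m n (a b c : V), G.walkLen m a b → G.walkLen n b c →
    G.walkLen (m + n) a c := by
  intro m
  induction m with
  | zero => intro n a b c h h'; cases h; simpa using h'
  | succ m ih =>
    intro n a b c h h'
    obtain ⟨z, hz, hzb⟩ := h
    have : G.walkLen (m + n) z c := ih n z b c hzb h'
    have e : m + 1 + n = (m + n) + 1 := by omega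
    rw [e]
    exact ⟨z, hz, this⟩

lemma exists_walkLen (x y : V) : ∃ n, G.walkLen n x y := by
  have h := G.connected x y
  induction h with
  | refl => exact ⟨0, rfl⟩
  | tail hab hbc ih =>
    obtain ⟨n, hn⟩ := ih
    exact ⟨n + 1, G.walkLen_append_edge n _ _ _ hn hbc⟩

lemma distSet_nonempty (x y : V) : {n | G.walkLen n x y}.Nonempty := G.exists_walkLen x y

lemma walkLen_dist (x y : V) : G.walkLen (G.dist x y) x y :=
  Nat.sInf_mem (G.distSet_nonempty x y)

lemma dist_le {n : ℕ} {x y : V} (h : G.walkLen n x y) : G.dist x y ≤ n := Nat.sInf_le h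

lemma dist_self (x : V) : G.dist x x = 0 :=
  Nat.le_zero.mp (G.dist_le (show G.walkLen 0 x x from rfl))

lemma dist_symm (x y : V) : G.dist x y = G.dist y x :=
  le_antisymm (G.dist_le (G.walkLen_symm _ y x (G.walkLen_dist y x)))
    (G.dist_le (G.walkLen_symm _ x y (G.walkLen_dist x y)))

lemma dist_triangle (x y z : V) : G.dist x z ≤ G.dist x y + G.dist y z :=
  G.dist_le (G.walkLen_trans _ _ x y z (G.walkLen_dist x y) (G.walkLen_dist y z))

lemma dist_eq_zero {x y : V} (h : G.dist x y = 0) : x = y := by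
  have := G.walkLen_dist x y
  rw [h] at this
  exact this

lemma mem_ball_self {x : V} {R : ℕ} (hR : 0 < R) : x ∈ G.ball x R := by
  simp [ball, G.dist_self x, hR]

lemma exists_edge (x : V) : ∃ y, 0 < G.w x y := by
  by_contra h
  push_neg at h
  have hz : ∀ y, G.w x y = 0 := fun y => le_antisymm (h y) (G.nonneg x y)
  have : G.mu x = 0 := by simp [mu, hz]
  exact (G.mu_pos' x).ne' this

lemma ball_mono (x : V) {R R' : ℕ} (h : R ≤ R') : G.ball x R ⊆ G.ball x R' :=
  fun z hz => lt_of_lt_of_le hz h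

lemma ball_subset {x y : V} {R S : ℕ} (h : G.dist y x + R ≤ S) :
    G.ball x R ⊆ G.ball y S := by
  intro z hz
  have : G.dist y z ≤ G.dist y x + G.dist x z := G.dist_triangle y x z
  have hz' : G.dist x z < R := hz
  calc G.dist y z ≤ G.dist y x + G.dist x z := this
    _ < G.dist y x + R := by omega
    _ ≤ S := h

section P0

variable {G}
variable [Nonempty V] {p₀ : ℝ} (hp : 0 < p₀)
  (hP0 : ∀ x y : V, 0 < G.w x y → p₀ ≤ G.w x y / G.mu x)

include hp hP0

lemma p0_le_one : p₀ ≤ 1 := by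
  obtain ⟨y, hy⟩ := G.exists_edge (Classical.arbitrary V)
  exact le_trans (hP0 _ y hy) (G.P_le_one _ y)

lemma nbr_finite (x : V) : {y | 0 < G.w x y}.Finite := by
  by_contra hinf
  replace hinf : {y | 0 < G.w x y}.Infinite := hinf
  obtain ⟨t, hts, htc⟩ := hinf.exists_subset_card_eq (⌈1/p₀⌉₊ + 1)
  have hsum : ∑ y ∈ t, G.w x y ≤ G.mu x :=
    Summable.sum_le_tsum t (fun y _ => G.nonneg x y) (G.summable' x)
  have hterm : ∀ y ∈ t, p₀ * G.mu x ≤ G.w x y := by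
    intro y hy
    have h1 := hP0 x y (hts hy)
    rwa [le_div_iff₀ (G.mu_pos' x)] at h1
  have hcard : (t.card : ℝ) * (p₀ * G.mu x) ≤ G.mu x := by
    calc (t.card : ℝ) * (p₀ * G.mu x) = t.card • (p₀ * G.mu x) := by
          rw [nsmul_eq_mul]
      _ ≤ ∑ y ∈ t, G.w x y := Finset.card_nsmul_le_sum t _ _ hterm
      _ ≤ G.mu x := hsum
  have hmu := G.mu_pos' x
  have h2 : (t.card : ℝ) * p₀ ≤ 1 := by
    have := hcard
    nlinarith
  have h3 : (t.card : ℝ) ≤ 1 / p₀ := by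
    rw [le_div_iff₀ hp]; exact h2
  have h4 : (1 / p₀ : ℝ) ≤ (⌈1/p₀⌉₊ : ℝ) := Nat.le_ceil _
  rw [htc] at h3
  push_cast at h3
  linarith

lemma cball_finite (x : V) : ∀ R : ℕ, (G.cball x R).Finite := by
  intro R
  induction R with
  | zero =>
    apply Set.Finite.subset (Set.finite_singleton x)
    intro y hy
    have : G.dist x y = 0 := Nat.le_zero.mp hy
    exact (G.dist_eq_zero this).symm
  | succ R ih =>
    apply Set.Finite.subset (ih.union (ih.biUnion (fun z _ => nbr_finite hp hP0 z)))
    intro y hy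
    have hd : G.dist x y ≤ R + 1 := hy
    rcases Nat.eq_zero_or_pos (G.dist x y) with h0 | hpos
    · left
      show G.dist x y ≤ R
      omega
    · obtain ⟨n, hn⟩ := Nat.exists_eq_succ_of_ne_zero hpos.ne'
      have hw : G.walkLen (n + 1) x y := by
        have := G.walkLen_dist x y
        rwa [hn] at this
      obtain ⟨z, hxz, hzy⟩ := G.walkLen_last hw
      have hdz : G.dist x z ≤ R := le_trans (G.dist_le hxz) (by omega)
      right
      exact Set.mem_biUnion hdz hzy

lemma ball_finite (x : V) (R : ℕ) : (G.ball x R).Finite :=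
  (cball_finite hp hP0 x R).subset (fun y hy => show G.dist x y ≤ R from le_of_lt hy)

end P0

lemma muSet_eq_sum {A : Set V} (hA : A.Finite) :
    G.muSet A = ∑ y ∈ hA.toFinset, G.mu y := by
  calc G.muSet A = ∑' y, A.indicator G.mu y := tsum_subtype A G.mu
    _ = ∑ y ∈ hA.toFinset, A.indicator G.mu y :=
        tsum_eq_sum (fun b hb => Set.indicator_of_notMem (by simpa using hb) _)
    _ = ∑ y ∈ hA.toFinset, G.mu y :=
        Finset.sum_congr rfl (fun y hy => Set.indicator_of_mem (by simpa using hy) _)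

lemma muSet_mono {A B : Set V} (hB : B.Finite) (hAB : A ⊆ B) :
    G.muSet A ≤ G.muSet B := by
  have hA := hB.subset hAB
  rw [G.muSet_eq_sum hA, G.muSet_eq_sum hB]
  apply Finset.sum_le_sum_of_subset_of_nonneg
  · intro y hy
    simp only [Set.Finite.mem_toFinset] at *
    exact hAB hy
  · exact fun y _ _ => G.mu_nonneg y

lemma muSet_pos {A : Set V} (hA : A.Finite) {x : V} (hx : x ∈ A) : 0 < G.muSet A := by
  rw [G.muSet_eq_sum hA]
  apply Finset.sum_pos' (fun y _ => G.mu_nonneg y)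
  exact ⟨x, by simpa using hx, G.mu_pos' x⟩

lemma survive_nonneg (B : Set V) : ∀ (n : ℕ) (x : V), 0 ≤ G.survive B n x := by
  intro n
  induction n with
  | zero => intro x; unfold survive; split <;> norm_num
  | succ n ih =>
    intro x
    unfold survive
    split
    · exact tsum_nonneg (fun y => mul_nonneg (G.P_nonneg x y) (ih y))
    · exact le_refl 0

lemma survive_le_one (B : Set V) : ∀ (n : ℕ) (x : V), G.survive B n x ≤ 1 := by
  intro n
  induction n with
  | zero => intro x; unfold survive; split <;> norm_num
  | succ n ih =>
    intro x
    unfold survive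
    split
    · calc (∑' y, G.P x y * G.survive B n y) ≤ ∑' y, G.P x y := by
            apply Summable.tsum_le_tsum _ (G.summable_P_mul (G.survive_nonneg B n) ih)
              (G.P_summable x)
            intro y
            exact mul_le_of_le_one_right (G.P_nonneg x y) (ih y)
        _ = 1 := G.tsum_P x
    · norm_num

lemma survive_not_mem {B : Set V} {x : V} (h : x ∉ B) (n : ℕ) :
    G.survive B n x = 0 := by
  cases n <;> simp [survive, h]

lemma survive_mono_set {B B' : Set V} (h : B ⊆ B') :
    ∀ (n : ℕ) (x : V), G.survive B n x ≤ G.survive B' n x := by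
  intro n
  induction n with
  | zero =>
    intro x
    unfold survive
    by_cases hx : x ∈ B
    · simp [hx, h hx]
    · simp [hx]; split <;> norm_num
  | succ n ih =>
    intro x
    by_cases hx : x ∈ B
    · have hx' : x ∈ B' := h hx
      show G.survive B (n+1) x ≤ G.survive B' (n+1) x
      unfold survive
      simp only [hx, hx', if_true]
      apply Summable.tsum_le_tsum _
        (G.summable_P_mul (G.survive_nonneg B n) (G.survive_le_one B n))
        (G.summable_P_mul (G.survive_nonneg B' n) (G.survive_le_one B' n))
      intro y
      exact mul_le_mul_of_nonneg_left (ih y) (G.P_nonneg x y)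
    · rw [G.survive_not_mem hx]
      exact G.survive_nonneg B' _ x

lemma survive_succ_le (B : Set V) : ∀ (n : ℕ) (x : V),
    G.survive B (n + 1) x ≤ G.survive B n x := by
  intro n
  induction n with
  | zero =>
    intro x
    by_cases hx : x ∈ B
    · show G.survive B 1 x ≤ G.survive B 0 x
      unfold survive
      simp only [hx, if_true]
      calc (∑' y, G.P x y * G.survive B 0 y) ≤ ∑' y, G.P x y := by
            apply Summable.tsum_le_tsum _
              (G.summable_P_mul (G.survive_nonneg B 0) (G.survive_le_one B 0))
              (G.P_summable x)
            intro y
            exact mul_le_of_le_one_right (G.P_nonneg x y) (G.survive_le_one B 0 y)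
        _ = 1 := G.tsum_P x
    · rw [G.survive_not_mem hx, G.survive_not_mem hx]
  | succ n ih =>
    intro x
    by_cases hx : x ∈ B
    · show G.survive B (n+2) x ≤ G.survive B (n+1) x
      unfold survive
      simp only [hx, if_true]
      apply Summable.tsum_le_tsum _
        (G.summable_P_mul (G.survive_nonneg B (n+1)) (G.survive_le_one B (n+1)))
        (G.summable_P_mul (G.survive_nonneg B n) (G.survive_le_one B n))
      intro y
      exact mul_le_mul_of_nonneg_left (ih y) (G.P_nonneg x y)
    · rw [G.survive_not_mem hx, G.survive_not_mem hx]

lemma survive_antitone (B : Set V) {m n : ℕ} (h : m ≤ n) (x : V) :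
    G.survive B n x ≤ G.survive B m x := by
  induction n with
  | zero => cases Nat.le_zero.mp h; exact le_refl _
  | succ n ih =>
    rcases Nat.lt_or_ge m (n+1) with h' | h'
    · exact le_trans (G.survive_succ_le B n x) (ih (Nat.lt_succ_iff.mp h'))
    · have : m = n + 1 := le_antisymm h h'
      rw [this]

/-- `escapes B ℓ z`: there is a walk of length `ℓ` from `z` ending outside `B`. -/
def escapes (G : WeightedGraph V) (B : Set V) : ℕ → V → Prop
  | 0, z => z ∉ B
  | (ℓ+1), z => ∃ y, 0 < G.w z y ∧ G.escapes B ℓ y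

lemma escapes_of_walkLen {B : Set V} : ∀ (n : ℕ) (z y : V),
    G.walkLen n z y → y ∉ B → G.escapes B n z := by
  intro n
  induction n with
  | zero => intro z y h hy; cases h; exact hy
  | succ n ih =>
    intro z y h hy
    obtain ⟨u, hu, huw⟩ := h
    exact ⟨u, hu, ih u y huw hy⟩

lemma exists_escape [Infinite V] {B : Set V} (hB : B.Finite) (z : V) :
    ∃ ℓ, G.escapes B ℓ z := by
  obtain ⟨y, hy⟩ := hB.infinite_compl.nonempty
  obtain ⟨n, hn⟩ := G.exists_walkLen z y
  exact ⟨n, G.escapes_of_walkLen n z y hn hy⟩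

lemma survive_succ {B : Set V} {x : V} (hx : x ∈ B) (n : ℕ) :
    G.survive B (n + 1) x = ∑' y, G.P x y * G.survive B n y := by
  conv_lhs => rw [survive]
  rw [if_pos hx]

lemma survive_escape {p₀ : ℝ} (hp : 0 < p₀) (hp1 : p₀ ≤ 1)
    (hP0 : ∀ x y : V, 0 < G.w x y → p₀ ≤ G.w x y / G.mu x)
    {B : Set V} {s : ℝ} (hs : 0 ≤ s) {n : ℕ}
    (hbd : ∀ v, G.survive B n v ≤ s) :
    ∀ (ℓ : ℕ) (z : V), G.escapes B ℓ z → G.survive B (n + ℓ) z ≤ (1 - p₀ ^ ℓ) * s := by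
  intro ℓ
  induction ℓ with
  | zero =>
    intro z hz
    rw [G.survive_not_mem hz]
    simp
  | succ ℓ ih =>
    intro z hz
    obtain ⟨y₀, hw, hesc⟩ := hz
    have hple : p₀ ^ (ℓ + 1) ≤ 1 := pow_le_one₀ hp.le hp1
    have hrhs0 : 0 ≤ (1 - p₀ ^ (ℓ + 1)) * s := mul_nonneg (by linarith) hs
    by_cases hzB : z ∈ B
    · have key : G.survive B (n + (ℓ + 1)) z = ∑' y, G.P z y * G.survive B (n + ℓ) y := by
        show G.survive B ((n + ℓ) + 1) z = _
        exact G.survive_succ hzB (n + ℓ)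
      set f := fun y => G.P z y * G.survive B (n + ℓ) y with hf
      have hfs : Summable f :=
        G.summable_P_mul (G.survive_nonneg B _) (G.survive_le_one B _)
      set g := fun y => G.P z y * s with hg
      have hgs : Summable g := (G.P_summable z).mul_right s
      have htg : ∑' y, g y = s := by
        rw [hg, tsum_mul_right, G.tsum_P, one_mul]
      have hbd' : ∀ v, G.survive B (n + ℓ) v ≤ s := fun v =>
        le_trans (G.survive_antitone B (Nat.le_add_right n ℓ) v) (hbd v)
      have hite_f : Summable (fun y => ite (y = y₀) 0 (f y)) := by
        apply Summable.of_nonneg_of_le _ _ hfs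
        · intro y
          by_cases hy : y = y₀ <;>
            simp [hy, hf, mul_nonneg (G.P_nonneg z y) (G.survive_nonneg B _ y)]
        · intro y
          by_cases hy : y = y₀ <;>
            simp [hy, hf, mul_nonneg (G.P_nonneg z y₀) (G.survive_nonneg B _ y₀)]
      have hite_g : Summable (fun y => ite (y = y₀) 0 (g y)) := by
        apply Summable.of_nonneg_of_le _ _ hgs
        · intro y
          by_cases hy : y = y₀ <;> simp [hy, hg, mul_nonneg (G.P_nonneg z y) hs]
        · intro y
          by_cases hy : y = y₀ <;> simp [hy, hg, mul_nonneg (G.P_nonneg z y₀) hs]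
      have h2 : (∑' y, ite (y = y₀) 0 (f y)) ≤ ∑' y, ite (y = y₀) 0 (g y) := by
        apply Summable.tsum_le_tsum _ hite_f hite_g
        intro y
        by_cases hy : y = y₀
        · simp [hy]
        · simp only [hy, if_false]
          exact mul_le_mul_of_nonneg_left (hbd' y) (G.P_nonneg z y)
      have h2' : (∑' y, ite (y = y₀) 0 (g y)) = s - G.P z y₀ * s := by
        have := Summable.tsum_eq_add_tsum_ite hgs y₀
        rw [htg] at this
        have hgy : g y₀ = G.P z y₀ * s := rfl
        linarith [this, hgy ▸ this]
      have h1 : f y₀ ≤ G.P z y₀ * ((1 - p₀ ^ ℓ) * s) :=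
        mul_le_mul_of_nonneg_left (ih y₀ hesc) (G.P_nonneg z y₀)
      have hq : p₀ ≤ G.P z y₀ := hP0 z y₀ hw
      have hq1 : G.P z y₀ ≤ 1 := G.P_le_one z y₀
      have hpl0 : (0:ℝ) ≤ p₀ ^ ℓ := pow_nonneg hp.le ℓ
      have hsplit := Summable.tsum_eq_add_tsum_ite hfs y₀
      calc G.survive B (n + (ℓ + 1)) z
          = f y₀ + ∑' y, ite (y = y₀) 0 (f y) := by rw [key]; exact hsplit
        _ ≤ G.P z y₀ * ((1 - p₀ ^ ℓ) * s) + (s - G.P z y₀ * s) := by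
            rw [h2'] at h2
            linarith
        _ ≤ (1 - p₀ ^ (ℓ + 1)) * s := by
            rw [pow_succ]
            nlinarith [mul_le_mul_of_nonneg_right hq (mul_nonneg hpl0 hs)]
    · rw [G.survive_not_mem hzB]
      exact hrhs0

lemma survive_geom_bound [Infinite V] {p₀ : ℝ} (hp : 0 < p₀) (hp1 : p₀ ≤ 1)
    (hP0 : ∀ x y : V, 0 < G.w x y → p₀ ≤ G.w x y / G.mu x)
    {B : Set V} (hB : B.Finite) :
    ∃ (L : ℕ) (θ : ℝ), 1 ≤ L ∧ 0 ≤ θ ∧ θ < 1 ∧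
      ∀ (n : ℕ) (z : V), G.survive B n z ≤ θ ^ (n / L) := by
  choose ℓf hℓf using G.exists_escape hB
  set L := max 1 (hB.toFinset.sup ℓf) with hLdef
  have hL1 : 1 ≤ L := le_max_left _ _
  set θ := max (1 - p₀ ^ L) (1/2 : ℝ) with hθdef
  have hθ0 : (0:ℝ) ≤ θ := le_trans (by norm_num) (le_max_right _ _)
  have hθ1 : θ < 1 := max_lt (by linarith [pow_pos hp L]) (by norm_num)
  have claim : ∀ (k : ℕ) (z : V), G.survive B (k * L) z ≤ θ ^ k := by
    intro k
    induction k with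
    | zero => intro z; simpa using G.survive_le_one B 0 z
    | succ k ih =>
      intro z
      by_cases hzB : z ∈ B
      · have hlz : ℓf z ≤ L :=
          le_trans (Finset.le_sup (by simpa using hzB)) (le_max_right _ _)
        have h1 : G.survive B ((k + 1) * L) z ≤ G.survive B (k * L + ℓf z) z := by
          apply G.survive_antitone B
          rw [Nat.succ_mul]
          omega
        have h2 := G.survive_escape hp hp1 hP0 (pow_nonneg hθ0 k)
          (fun v => ih v) (ℓf z) z (hℓf z)
        have h3 : (1 : ℝ) - p₀ ^ (ℓf z) ≤ θ := by
          have hle : p₀ ^ L ≤ p₀ ^ (ℓf z) := pow_le_pow_of_le_one hp.le hp1 hlz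
          exact le_trans (by linarith) (le_max_left _ _)
        calc G.survive B ((k + 1) * L) z ≤ (1 - p₀ ^ (ℓf z)) * θ ^ k := le_trans h1 h2
          _ ≤ θ * θ ^ k := mul_le_mul_of_nonneg_right h3 (pow_nonneg hθ0 k)
          _ = θ ^ (k + 1) := by rw [pow_succ]; ring
      · rw [G.survive_not_mem hzB]
        exact pow_nonneg hθ0 _
  refine ⟨L, θ, hL1, hθ0, hθ1, fun n z => ?_⟩
  calc G.survive B n z ≤ G.survive B (n / L * L) z :=
        G.survive_antitone B (Nat.div_mul_le_self n L) z
    _ ≤ θ ^ (n / L) := claim _ z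

lemma sum_pow_div {θ : ℝ} {L : ℕ} (hL : 1 ≤ L) :
    ∀ m : ℕ, ∑ n ∈ Finset.range (L * m), θ ^ (n / L)
      = ∑ k ∈ Finset.range m, (L : ℝ) * θ ^ k := by
  intro m
  induction m with
  | zero => simp
  | succ m ih =>
    have hsplit : ∑ n ∈ Finset.range (L * m + L), θ ^ (n / L)
        = ∑ n ∈ Finset.range (L * m), θ ^ (n / L)
          + ∑ n ∈ Finset.Ico (L * m) (L * m + L), θ ^ (n / L) := by
      rw [Finset.range_eq_Ico, Finset.range_eq_Ico]
      exact (Finset.sum_Ico_consecutive (fun n => θ ^ (n / L)) (Nat.zero_le (L * m)) (Nat.le_add_right (L * m) L)).symm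
    have hconst : ∀ n ∈ Finset.Ico (L * m) (L * m + L), θ ^ (n / L) = θ ^ m := by
      intro n hn
      rw [Finset.mem_Ico] at hn
      have hL0 : 0 < L := by omega
      have h1 : m ≤ n / L := (Nat.le_div_iff_mul_le hL0).mpr (by rw [Nat.mul_comm m L]; omega)
      have h2 : n / L < m + 1 := (Nat.div_lt_iff_lt_mul hL0).mpr (by rw [Nat.succ_mul, Nat.mul_comm m L]; omega)
      have : n / L = m := by omega
      rw [this]
    rw [Nat.mul_succ, hsplit, ih, Finset.sum_range_succ,
      Finset.sum_congr rfl hconst, Finset.sum_const, Nat.card_Ico]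
    simp [nsmul_eq_mul]

lemma summable_pow_div {θ : ℝ} (h0 : 0 ≤ θ) (h1 : θ < 1) {L : ℕ} (hL : 1 ≤ L) :
    Summable (fun n => θ ^ (n / L)) := by
  apply summable_of_sum_range_le (c := L * (1 - θ)⁻¹) (fun n => pow_nonneg h0 _)
  intro m
  calc ∑ n ∈ Finset.range m, θ ^ (n / L)
      ≤ ∑ n ∈ Finset.range (L * m), θ ^ (n / L) :=
        Finset.sum_le_sum_of_subset_of_nonneg
          (Finset.range_subset_range.mpr (Nat.le_mul_of_pos_left m (by omega)))
          (fun n _ _ => pow_nonneg h0 _)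
    _ = ∑ k ∈ Finset.range m, (L : ℝ) * θ ^ k := sum_pow_div hL m
    _ = (L : ℝ) * ∑ k ∈ Finset.range m, θ ^ k := by rw [Finset.mul_sum]
    _ ≤ (L : ℝ) * (1 - θ)⁻¹ := by
        apply mul_le_mul_of_nonneg_left _ (by positivity)
        calc ∑ k ∈ Finset.range m, θ ^ k
            ≤ ∑' k : ℕ, θ ^ k := Summable.sum_le_tsum _ (fun k _ => pow_nonneg h0 _)
              (summable_geometric_of_lt_one h0 h1)
          _ = (1 - θ)⁻¹ := tsum_geometric_of_lt_one h0 h1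

lemma summable_survive [Infinite V] {p₀ : ℝ} (hp : 0 < p₀) (hp1 : p₀ ≤ 1)
    (hP0 : ∀ x y : V, 0 < G.w x y → p₀ ≤ G.w x y / G.mu x)
    {B : Set V} (hB : B.Finite) (z : V) :
    Summable (fun n => G.survive B n z) := by
  obtain ⟨L, θ, hL, h0, h1, hbd⟩ := G.survive_geom_bound hp hp1 hP0 hB
  exact Summable.of_nonneg_of_le (fun n => G.survive_nonneg B n z)
    (fun n => hbd n z) (summable_pow_div h0 h1 hL)

lemma meanExit_nonneg (x : V) (R : ℕ) : 0 ≤ G.meanExit x R :=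
  tsum_nonneg (fun n => G.survive_nonneg _ n x)

lemma one_le_meanExit {x : V} {R : ℕ}
    (hsum : Summable (fun n => G.survive (G.ball x R) n x)) (hR : 0 < R) :
    1 ≤ G.meanExit x R := by
  have h0 : G.survive (G.ball x R) 0 x = 1 := by
    unfold survive
    rw [if_pos (G.mem_ball_self hR)]
  calc (1:ℝ) = G.survive (G.ball x R) 0 x := h0.symm
    _ ≤ ∑' n, G.survive (G.ball x R) n x :=
        Summable.le_tsum hsum 0 (fun n _ => G.survive_nonneg _ n x)

lemma meanExit_mono {x : V} {R R' : ℕ} (h : R ≤ R')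
    (hsum' : Summable (fun n => G.survive (G.ball x R') n x)) :
    G.meanExit x R ≤ G.meanExit x R' := by
  apply Summable.tsum_le_tsum (fun n => G.survive_mono_set (G.ball_mono x h) n x) _ hsum'
  exact Summable.of_nonneg_of_le (fun n => G.survive_nonneg _ n x)
    (fun n => G.survive_mono_set (G.ball_mono x h) n x) hsum'

end WeightedGraph
end Aux

open WeightedGraph in
/-- Under `(p₀)`, the skewed parabolic mean value inequality implies `(VC)`, `(TC)`
and the mean value inequality `(MV)`. -/
theorem vc_tc_mv_of_spmv {V : Type*} [Countable V] [Infinite V] (G : WeightedGraph V)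
    (hp0 : G.condP0) (hspmv : G.condSPMV) :
    G.condVC ∧ G.condTC ∧ G.condMV := by
  obtain ⟨p₀, hp, hP0⟩ := hp0
  obtain ⟨c₁, c₂, C, hc₁, hc₁₂, hc₂, hC, hS⟩ := hspmv
  have hp1 : p₀ ≤ 1 := p0_le_one hp hP0
  have hball : ∀ (x : V) (R : ℕ), (G.ball x R).Finite := fun x R => ball_finite hp hP0 x R
  have hsum : ∀ (x z : V) (R : ℕ), Summable (fun n => G.survive (G.ball x R) n z) :=
    fun x z R => G.summable_survive hp hp1 hP0 (hball x R) z
  have hE1 : ∀ (x : V) (R : ℕ), 0 < R → 1 ≤ G.meanExit x R :=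
    fun x R hR => G.one_le_meanExit (hsum x x R) hR
  have hEmono : ∀ (x : V) (R R' : ℕ), R ≤ R' → G.meanExit x R ≤ G.meanExit x R' :=
    fun x R R' h => G.meanExit_mono h (hsum x x R')
  have hVpos : ∀ (x : V) (R : ℕ), 0 < R → 0 < G.vol x R :=
    fun x R hR => G.muSet_pos (hball x R) (G.mem_ball_self hR)
  have hVmono : ∀ (x y : V) (R S : ℕ), G.ball x R ⊆ G.ball y S → G.vol x R ≤ G.vol y S :=
    fun x y R S h => G.muSet_mono (hball y S) h
  -- the master inequality, obtained by applying (sPMV) to the constant solution 1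
  have master : ∀ (x : V) (R : ℕ), 0 < R → ∀ y ∈ G.ball x R,
      G.vol y (2*R) * G.meanExit y (2*R) ≤ (2*C) * (G.meanExit x R * G.vol x R) := by
    intro x R hR y hy
    have h := hS x R hR y hy (fun _ _ => (1:ℝ))
      (fun i _ z _ => zero_le_one)
      (fun i _ z _ => by
        simp only [mul_one]
        exact (G.tsum_P z).symm)
    set E := G.meanExit x R with hE
    set N := (Finset.Icc ⌈c₁ * E⌉₊ ⌊c₂ * E⌋₊).card with hNdef
    have hinner : ∀ i ∈ Finset.Icc ⌈c₁ * E⌉₊ ⌊c₂ * E⌋₊,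
        (∑' z : G.ball x R, (1:ℝ) * G.mu z) = G.vol x R := by
      intro i _
      simp only [one_mul]
      rfl
    rw [Finset.sum_congr rfl hinner, Finset.sum_const, nsmul_eq_mul] at h
    have hE0 : (1:ℝ) ≤ E := hE1 x R hR
    have hN : (N:ℝ) ≤ 2 * E := by
      have h1 : N ≤ ⌊c₂ * E⌋₊ + 1 := by
        rw [hNdef, Nat.card_Icc]; omega
      have h2 : (⌊c₂ * E⌋₊ : ℝ) ≤ c₂ * E := Nat.floor_le (by nlinarith)
      have h3 : c₂ * E ≤ E := by nlinarith
      have h4 : (N : ℝ) ≤ (⌊c₂ * E⌋₊ : ℝ) + 1 := by exact_mod_cast h1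
      linarith
    have hVE : 0 < G.vol y (2*R) * G.meanExit y (2*R) := by
      have := hVpos y (2*R) (by omega)
      have := hE1 y (2*R) (by omega)
      nlinarith
    rw [div_mul_eq_mul_div, le_div_iff₀ hVE, one_mul] at h
    have hVx : (0:ℝ) ≤ G.vol x R := le_of_lt (hVpos x R hR)
    calc G.vol y (2*R) * G.meanExit y (2*R) ≤ C * ((N:ℝ) * G.vol x R) := h
      _ ≤ C * (2 * E * G.vol x R) :=
          mul_le_mul_of_nonneg_left (mul_le_mul_of_nonneg_right hN hVx) (by linarith)
      _ = (2*C) * (E * G.vol x R) := by ring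
  -- volume doubling and time doubling
  have VD : ∀ (y : V) (R : ℕ), 0 < R → G.vol y (2*R) ≤ (2*C) * G.vol y R := by
    intro y R hR
    have h := master y R hR y (G.mem_ball_self hR)
    have hE2 : G.meanExit y R ≤ G.meanExit y (2*R) := hEmono y R (2*R) (by omega)
    have hEpos : (0:ℝ) < G.meanExit y (2*R) :=
      lt_of_lt_of_le one_pos (hE1 y (2*R) (by omega))
    have hVr : (0:ℝ) ≤ G.vol y R := le_of_lt (hVpos y R hR)
    apply le_of_mul_le_mul_right _ hEpos
    calc G.vol y (2*R) * G.meanExit y (2*R) ≤ (2*C) * (G.meanExit y R * G.vol y R) := h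
      _ ≤ (2*C) * (G.meanExit y (2*R) * G.vol y R) :=
          mul_le_mul_of_nonneg_left (mul_le_mul_of_nonneg_right hE2 hVr) (by linarith)
      _ = 2*C * G.vol y R * G.meanExit y (2*R) := by ring
  have TD : ∀ (y : V) (R : ℕ), 0 < R → G.meanExit y (2*R) ≤ (2*C) * G.meanExit y R := by
    intro y R hR
    have h := master y R hR y (G.mem_ball_self hR)
    have hV2 : G.vol y R ≤ G.vol y (2*R) := hVmono y y R (2*R) (G.ball_mono y (by omega))
    have hVpos2 : (0:ℝ) < G.vol y (2*R) := hVpos y (2*R) (by omega)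
    have hEr : (0:ℝ) ≤ G.meanExit y R := G.meanExit_nonneg y R
    apply le_of_mul_le_mul_right _ hVpos2
    calc G.meanExit y (2*R) * G.vol y (2*R) = G.vol y (2*R) * G.meanExit y (2*R) := by ring
      _ ≤ (2*C) * (G.meanExit y R * G.vol y R) := h
      _ ≤ (2*C) * (G.meanExit y R * G.vol y (2*R)) :=
          mul_le_mul_of_nonneg_left (mul_le_mul_of_nonneg_left hV2 hEr) (by linarith)
      _ = 2*C * G.meanExit y R * G.vol y (2*R) := by ring
  refine ⟨⟨(2*C)*(2*C), by nlinarith, ?_⟩, ⟨(2*C)*(2*C), by nlinarith, ?_⟩, ⟨2*C, by nlinarith, ?_⟩⟩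
  · -- (VC)
    intro x R hR y hy
    have hd : G.dist y x < R := by rw [G.dist_symm]; exact hy
    have hsub : G.ball x (2*R) ⊆ G.ball y (2*(2*R)) :=
      G.ball_subset (by omega)
    calc G.vol x (2*R) ≤ G.vol y (2*(2*R)) := hVmono x y (2*R) (2*(2*R)) hsub
      _ ≤ (2*C) * G.vol y (2*R) := VD y (2*R) (by omega)
      _ ≤ (2*C) * ((2*C) * G.vol y R) :=
          mul_le_mul_of_nonneg_left (VD y R hR) (by linarith)
      _ = ((2*C)*(2*C)) * G.vol y R := by ring
  · -- (TC)
    intro x R hR y hy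
    have hd : G.dist y x < R := by rw [G.dist_symm]; exact hy
    have hx : x ∈ G.ball y (2*R) := by
      show G.dist y x < 2*R
      omega
    have h := master y (2*R) (by omega) x hx
    have hsub : G.ball y (2*R) ⊆ G.ball x (2*(2*R)) := by
      apply G.ball_subset
      have : G.dist x y < R := hy
      omega
    have hV2 : G.vol y (2*R) ≤ G.vol x (2*(2*R)) := hVmono y x (2*R) (2*(2*R)) hsub
    have hVpos4 : (0:ℝ) < G.vol x (2*(2*R)) := hVpos x (2*(2*R)) (by omega)
    have hEy : (0:ℝ) ≤ G.meanExit y (2*R) := G.meanExit_nonneg y (2*R)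
    have h4 : G.meanExit x (2*(2*R)) ≤ (2*C) * G.meanExit y (2*R) := by
      apply le_of_mul_le_mul_right _ hVpos4
      calc G.meanExit x (2*(2*R)) * G.vol x (2*(2*R))
          = G.vol x (2*(2*R)) * G.meanExit x (2*(2*R)) := by ring
        _ ≤ (2*C) * (G.meanExit y (2*R) * G.vol y (2*R)) := h
        _ ≤ (2*C) * (G.meanExit y (2*R) * G.vol x (2*(2*R))) :=
            mul_le_mul_of_nonneg_left (mul_le_mul_of_nonneg_left hV2 hEy) (by linarith)
        _ = 2*C * G.meanExit y (2*R) * G.vol x (2*(2*R)) := by ring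
    calc G.meanExit x (2*R) ≤ G.meanExit x (2*(2*R)) := hEmono x (2*R) (2*(2*R)) (by omega)
      _ ≤ (2*C) * G.meanExit y (2*R) := h4
      _ ≤ (2*C) * ((2*C) * G.meanExit y R) :=
          mul_le_mul_of_nonneg_left (TD y R hR) (by linarith)
      _ = ((2*C)*(2*C)) * G.meanExit y R := by ring
  · -- (MV)
    intro x R hR u hu hharm
    have h := hS x R hR x (G.mem_ball_self hR) (fun _ z => u z)
      (fun i _ z hz => hu z (show G.dist x z ≤ R from le_of_lt hz))
      (fun i _ z hz => (hharm z hz).symm)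
    set E := G.meanExit x R with hE
    set S := (∑' z : G.ball x R, u z * G.mu z) with hSdef
    set N := (Finset.Icc ⌈c₁ * E⌉₊ ⌊c₂ * E⌋₊).card with hNdef
    rw [Finset.sum_const, nsmul_eq_mul] at h
    have hS0 : 0 ≤ S := tsum_nonneg
      (fun z => mul_nonneg (hu z (show G.dist x (z:V) ≤ R from le_of_lt z.2)) (G.mu_nonneg z))
    have hE0 : (1:ℝ) ≤ E := hE1 x R hR
    have hN : (N:ℝ) ≤ 2 * E := by
      have h1 : N ≤ ⌊c₂ * E⌋₊ + 1 := by
        rw [hNdef, Nat.card_Icc]; omega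
      have h2 : (⌊c₂ * E⌋₊ : ℝ) ≤ c₂ * E := Nat.floor_le (by nlinarith)
      have h3 : c₂ * E ≤ E := by nlinarith
      have h4 : (N : ℝ) ≤ (⌊c₂ * E⌋₊ : ℝ) + 1 := by exact_mod_cast h1
      linarith
    have hE2 : E ≤ G.meanExit x (2*R) := hEmono x R (2*R) (by omega)
    have hEpos2 : (0:ℝ) < G.meanExit x (2*R) :=
      lt_of_lt_of_le one_pos (hE1 x (2*R) (by omega))
    have hVpos2 : (0:ℝ) < G.vol x (2*R) := hVpos x (2*R) (by omega)
    have hVpos1 : (0:ℝ) < G.vol x R := hVpos x R hR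
    have hVmono2 : G.vol x R ≤ G.vol x (2*R) := hVmono x x R (2*R) (G.ball_mono x (by omega))
    calc u x ≤ C / (G.vol x (2*R) * G.meanExit x (2*R)) * ((N:ℝ) * S) := h
      _ ≤ C / (G.vol x (2*R) * G.meanExit x (2*R)) * (2 * G.meanExit x (2*R) * S) := by
          have hnn : (0:ℝ) ≤ C / (G.vol x (2*R) * G.meanExit x (2*R)) := by positivity
          have h5 : (N:ℝ) * S ≤ 2 * G.meanExit x (2*R) * S := by nlinarith
          exact mul_le_mul_of_nonneg_left h5 hnn
      _ = 2 * C / G.vol x (2*R) * S := by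
          field_simp
      _ ≤ 2 * C / G.vol x R * S := by
          have h6 : 2 * C / G.vol x (2*R) ≤ 2 * C / G.vol x R :=
            div_le_div_of_nonneg_left (by linarith) hVpos1 hVmono2
          exact mul_le_mul_of_nonneg_right h6 hS0
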